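/- Let G be a graph, k ≥ 2, and ℓ: V(G) → {0,…,k−1}. If F is an inclusionwise minimal (ℓ,k)-factor of G, then F can be partitioned into k matchings such that each vertex v is covered by at least ℓ(v) of them. -/

import Mathlib

/-- `M` is a matching of `G`: a set of edges of `G` that are pairwise vertex-disjoint. -/
def IsMatching {V : Type*} (G : SimpleGraph V) (M : Finset (Sym2 V)) : Prop :=
  ↑M ⊆ G.edgeSet ∧ (M : Set (Sym2 V)).Pairwise fun e f => ∀ v : V, ¬(v ∈ e ∧ v ∈ f)

/-- A vertex `v` is covered by an edge set `F` if some edge of `F` is incident to it. -/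
def Covers {V : Type*} (F : Finset (Sym2 V)) (v : V) : Prop := ∃ e ∈ F, v ∈ e

instance {V : Type*} [DecidableEq V] (F : Finset (Sym2 V)) (v : V) : Decidable (Covers F v) :=
  inferInstanceAs (Decidable (∃ e ∈ F, v ∈ e))

/-- A stable (independent) set of vertices. -/
def IsStable {V : Type*} (G : SimpleGraph V) (S : Finset V) : Prop :=
  ∀ u ∈ S, ∀ v ∈ S, ¬ G.Adj u v

/-- The external neighborhood `N(S)`. -/
def nbr {V : Type*} [Fintype V] [DecidableEq V] (G : SimpleGraph V) [DecidableRel G.Adj]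
    (S : Finset V) : Finset V :=
  Finset.univ.filter fun w => w ∉ S ∧ ∃ u ∈ S, G.Adj u w

/-- degree of a vertex in an edge set -/
def degF {V : Type*} [DecidableEq V] (F : Finset (Sym2 V)) (v : V) : ℕ :=
  (F.filter fun e => v ∈ e).card

set_option linter.unusedSectionVars false
set_option linter.unusedVariables false
set_option maxHeartbeats 1000000

section Core
variable {V : Type*} [DecidableEq V] {k : ℕ}

/-- proper partial edge coloring on an edge set `A` -/
def properOn (A : Finset (Sym2 V)) (c : Sym2 V → Fin k) : Prop :=
  ∀ x : V, ∀ f ∈ A, ∀ g ∈ A, x ∈ f → x ∈ g → c f = c g → f = g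

def freeAt (A : Finset (Sym2 V)) (c : Sym2 V → Fin k) (x : V) (γ : Fin k) : Prop :=
  ∀ f ∈ A, x ∈ f → c f ≠ γ

def colorable (k : ℕ) (A : Finset (Sym2 V)) : Prop :=
  ∃ c : Sym2 V → Fin k, properOn A c

lemma properOn.mono {A B : Finset (Sym2 V)} {c : Sym2 V → Fin k} (h : properOn A c)
    (hBA : B ⊆ A) : properOn B c :=
  fun x f hf g hg => h x f (hBA hf) g (hBA hg)

lemma freeAt.mono {A B : Finset (Sym2 V)} {c : Sym2 V → Fin k} {x γ} (h : freeAt A c x γ)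
    (hBA : B ⊆ A) : freeAt B c x γ :=
  fun f hf => h f (hBA hf)

lemma degF_mono {A B : Finset (Sym2 V)} (h : A ⊆ B) (x : V) : degF A x ≤ degF B x :=
  Finset.card_le_card (Finset.filter_subset_filter _ h)

lemma degF_erase {A : Finset (Sym2 V)} {e : Sym2 V} (he : e ∈ A) {x : V} (hx : x ∈ e) :
    degF (A.erase e) x = degF A x - 1 := by
  unfold degF
  rw [Finset.filter_erase, Finset.card_erase_of_mem (Finset.mem_filter.mpr ⟨he, hx⟩)]

lemma degF_erase_not_mem {A : Finset (Sym2 V)} {e : Sym2 V} {x : V} (hx : x ∉ e) :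
    degF (A.erase e) x = degF A x := by
  unfold degF
  rw [Finset.filter_erase, Finset.erase_eq_of_notMem]
  intro h
  exact hx (Finset.mem_filter.mp h).2

lemma degF_pos {A : Finset (Sym2 V)} {e : Sym2 V} (he : e ∈ A) {x : V} (hx : x ∈ e) :
    1 ≤ degF A x :=
  Finset.card_pos.mpr ⟨e, Finset.mem_filter.mpr ⟨he, hx⟩⟩

lemma free_exists {A : Finset (Sym2 V)} {c : Sym2 V → Fin k} {x : V} (h : degF A x < k) :
    ∃ γ : Fin k, freeAt A c x γ := by
  by_contra hcon
  push_neg at hcon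
  have hsub : (Finset.univ : Finset (Fin k)) ⊆ (A.filter fun e => x ∈ e).image c := by
    intro γ _
    obtain ⟨f, hf, hxf, hcf⟩ := by
      have := hcon γ
      unfold freeAt at this
      push_neg at this
      exact this
    exact Finset.mem_image.mpr ⟨f, Finset.mem_filter.mpr ⟨hf, hxf⟩, hcf⟩
  have h1 := Finset.card_le_card hsub
  have h2 := Finset.card_image_le (s := A.filter fun e => x ∈ e) (f := c)
  simp only [Finset.card_univ, Fintype.card_fin] at h1
  unfold degF at h
  omega

lemma proper_update {A : Finset (Sym2 V)} {c : Sym2 V → Fin k} {e : Sym2 V} {γ : Fin k}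
    (hc : properOn (A.erase e) c) (hfree : ∀ x ∈ e, freeAt (A.erase e) c x γ) :
    properOn A (Function.update c e γ) := by
  intro x f hf g hg hxf hxg hfg
  by_cases hfe : f = e <;> by_cases hge : g = e
  · rw [hfe, hge]
  · exfalso
    rw [hfe, Function.update_self, Function.update_of_ne hge] at hfg
    exact hfree x (hfe ▸ hxf) g (Finset.mem_erase.mpr ⟨hge, hg⟩) hxg hfg.symm
  · exfalso
    rw [hge, Function.update_self, Function.update_of_ne hfe] at hfg
    exact hfree x (hge ▸ hxg) f (Finset.mem_erase.mpr ⟨hfe, hf⟩) hxf hfg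
  · rw [Function.update_of_ne hfe, Function.update_of_ne hge] at hfg
    exact hc x f (Finset.mem_erase.mpr ⟨hfe, hf⟩) g (Finset.mem_erase.mpr ⟨hge, hg⟩) hxf hxg hfg

lemma sym2_repr (e : Sym2 V) : ∃ a b : V, e = s(a, b) := by
  induction e using Sym2.ind with
  | _ x y => exact ⟨x, y, rfl⟩

lemma exists_other {e : Sym2 V} (hnd : ¬ e.IsDiag) {x : V} (hx : x ∈ e) :
    ∃ y, y ≠ x ∧ e = s(x, y) :=
  ⟨Sym2.Mem.other hx, Sym2.other_ne hnd hx, (Sym2.other_spec hx).symm⟩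

end Core

section ListLemmas
variable {γ' : Type*}

lemma chain'_suffix_imp {R S : γ' → γ' → Prop} :
    ∀ {l : List γ'}, l.Chain' R → (∀ a b r, (a :: b :: r) <:+ l → R a b → S a b) → l.Chain' S
  | [], _, _ => List.isChain_nil
  | [_], _, _ => List.isChain_singleton _
  | a :: b :: r, h, himp => by
    unfold List.Chain' at h ⊢
    rw [List.isChain_cons_cons] at h ⊢
    refine ⟨himp a b r (List.suffix_refl _) h.1, chain'_suffix_imp h.2 ?_⟩
    exact fun x y s hs hr => himp x y s (hs.trans (List.suffix_cons a _)) hr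

lemma suffix_head_unique : ∀ {l : List γ'} {a : γ'} {l₁ l₂ : List γ'},
    (a :: l₁) <:+ l → (a :: l₂) <:+ l → l.Nodup → l₁ = l₂
  | [], a, l₁, l₂, h₁, _, _ => by
    exact absurd (List.eq_nil_of_suffix_nil h₁) (by simp)
  | x :: t, a, l₁, l₂, h₁, h₂, hnd => by
    rcases List.suffix_cons_iff.mp h₁ with he₁ | hs₁ <;>
      rcases List.suffix_cons_iff.mp h₂ with he₂ | hs₂
    · exact ((List.cons_eq_cons.mp he₁).2).trans ((List.cons_eq_cons.mp he₂).2).symm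
    · exfalso
      obtain ⟨rfl, rfl⟩ := List.cons_eq_cons.mp he₁
      exact (List.nodup_cons.mp hnd).1 (hs₂.subset (List.mem_cons_self))
    · exfalso
      obtain ⟨rfl, rfl⟩ := List.cons_eq_cons.mp he₂
      exact (List.nodup_cons.mp hnd).1 (hs₁.subset (List.mem_cons_self))
    · exact suffix_head_unique hs₁ hs₂ (List.nodup_cons.mp hnd).2

lemma getLast?_suffix {l' l : List γ'} (h : l' <:+ l) (hne : l' ≠ []) :
    l'.getLast? = l.getLast? := by
  obtain ⟨p, rfl⟩ := h
  rw [List.getLast?_append]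
  cases hl : l'.getLast? with
  | none => exact absurd (List.getLast?_eq_none_iff.mp hl) hne
  | some a => rfl

lemma exists_succ : ∀ {l : List γ'} {a b : γ'}, a ∈ l → l.getLast? = some b → a ≠ b →
    ∃ t r, (a :: t :: r) <:+ l
  | [], a, b, ha, _, _ => absurd ha (by simp)
  | [x], a, b, ha, hb, hab => by
    simp only [List.mem_singleton] at ha
    simp only [List.getLast?_singleton, Option.some.injEq] at hb
    exact absurd (ha.trans hb) hab
  | x :: y :: t, a, b, ha, hb, hab => by
    by_cases hax : a = x
    · exact ⟨y, t, hax ▸ List.suffix_refl _⟩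
    · have ha' : a ∈ y :: t := by
        rcases List.mem_cons.mp ha with h | h
        · exact absurd h hax
        · exact h
      have hb' : (y :: t).getLast? = some b := by
        rwa [List.getLast?_cons_cons] at hb
      obtain ⟨t', r', hs⟩ := exists_succ ha' hb' hab
      exact ⟨t', r', hs.trans (List.suffix_cons x _)⟩

lemma mem_of_getLast?' {l : List γ'} {a : γ'} (h : l.getLast? = some a) : a ∈ l := by
  obtain ⟨hne, rfl⟩ := List.mem_getLast?_eq_getLast (x := a) (l := l) (by rw [h]; rfl)
  exact List.getLast_mem hne

end ListLemmas


section Walks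
variable {V : Type*} [DecidableEq V]

open SimpleGraph

lemma lemQ {G : SimpleGraph V}
    (h2 : ∀ x a b d : V, G.Adj x a → G.Adj x b → G.Adj x d → a = b ∨ a = d ∨ b = d) :
    ∀ n : ℕ, ∀ {z u v w : V} (p : G.Walk z v) (q : G.Walk z w), p.length + q.length ≤ n →
      p.IsPath → q.IsPath → G.Adj z u → u ∉ p.support → u ∉ q.support → v ≠ w →
      (∀ a b, G.Adj v a → G.Adj v b → a = b) →
      (∀ a b, G.Adj w a → G.Adj w b → a = b) → False := by
  intro n
  induction n with
  | zero =>
    intro z u v w p q hlen hp hq hzu hup huq hvw hv hw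
    cases p with
    | nil =>
      cases q with
      | nil => exact hvw rfl
      | cons h q₂ => simp [SimpleGraph.Walk.length_cons] at hlen
    | cons h p₂ => simp [SimpleGraph.Walk.length_cons] at hlen
  | succ n ih =>
    intro z u v w p q hlen hp hq hzu hup huq hvw hv hw
    cases p with
    | nil =>
      cases q with
      | nil => exact hvw rfl
      | cons hzy₂ q₂ =>
        rename_i y₂
        have huy₂ : u = y₂ := hv u y₂ hzu hzy₂
        apply huq
        rw [SimpleGraph.Walk.support_cons, huy₂]
        exact List.mem_cons_of_mem _ q₂.start_mem_support
    | cons hzy₁ p₂ =>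
      rename_i y₁
      cases q with
      | nil =>
        have huy₁ : u = y₁ := hw u y₁ hzu hzy₁
        apply hup
        rw [SimpleGraph.Walk.support_cons, huy₁]
        exact List.mem_cons_of_mem _ p₂.start_mem_support
      | cons hzy₂ q₂ =>
        rename_i y₂
        have huy₁ : u ≠ y₁ := by
          intro h
          apply hup
          rw [SimpleGraph.Walk.support_cons, h]
          exact List.mem_cons_of_mem _ p₂.start_mem_support
        have huy₂ : u ≠ y₂ := by
          intro h
          apply huq
          rw [SimpleGraph.Walk.support_cons, h]
          exact List.mem_cons_of_mem _ q₂.start_mem_support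
        have hyy : y₁ = y₂ := by
          rcases h2 z u y₁ y₂ hzu hzy₁ hzy₂ with h | h | h
          · exact absurd h huy₁
          · exact absurd h huy₂
          · exact h
        subst hyy
        rw [SimpleGraph.Walk.cons_isPath_iff] at hp hq
        refine ih p₂ q₂ ?_ hp.1 hq.1 hzy₁.symm hp.2 hq.2 hvw hv hw
        simp only [SimpleGraph.Walk.length_cons] at hlen
        omega

lemma lemP {G : SimpleGraph V}
    (h2 : ∀ x a b d : V, G.Adj x a → G.Adj x b → G.Adj x d → a = b ∨ a = d ∨ b = d)
    {u v w : V}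
    (hu : ∀ a b, G.Adj u a → G.Adj u b → a = b)
    (hv : ∀ a b, G.Adj v a → G.Adj v b → a = b)
    (hw : ∀ a b, G.Adj w a → G.Adj w b → a = b)
    (huv : u ≠ v) (huw : u ≠ w) (hvw : v ≠ w)
    (h₁ : G.Reachable u v) (h₂ : G.Reachable u w) : False := by
  obtain ⟨p0⟩ := h₁
  obtain ⟨q0⟩ := h₂
  obtain ⟨p, hp⟩ := p0.toPath
  obtain ⟨q, hq⟩ := q0.toPath
  cases p with
  | nil => exact huv rfl
  | cons hz₁ p₂ =>
    rename_i z₁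
    cases q with
    | nil => exact huw rfl
    | cons hz₂ q₂ =>
      rename_i z₂
      have hz : z₁ = z₂ := hu z₁ z₂ hz₁ hz₂
      subst hz
      rw [SimpleGraph.Walk.cons_isPath_iff] at hp hq
      exact lemQ h2 (p₂.length + q₂.length) p₂ q₂ le_rfl hp.1 hq.1 hz₁.symm hp.2 hq.2 hvw hv hw

end Walks

section Kempe
variable {V : Type*} [DecidableEq V] {k : ℕ}

def kempeG (B' : Finset (Sym2 V)) (c : Sym2 V → Fin k) (α β : Fin k) : SimpleGraph V where
  Adj x y := x ≠ y ∧ s(x, y) ∈ B' ∧ (c s(x, y) = α ∨ c s(x, y) = β)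
  symm := by
    constructor
    intro x y ⟨h1, h2, h3⟩
    refine ⟨h1.symm, ?_, ?_⟩ <;> rwa [Sym2.eq_swap]
  loopless := by constructor; intro x ⟨h1, _⟩; exact h1 rfl

variable {B' : Finset (Sym2 V)} {c : Sym2 V → Fin k} {α β : Fin k}

lemma kempe_adj_of {x y : V} {f : Sym2 V} (hxy : x ≠ y) (hf : f ∈ B') (hx : x ∈ f)
    (hy : y ∈ f) (hcol : c f = α ∨ c f = β) : (kempeG B' c α β).Adj x y := by
  have hfe : f = s(x, y) := (Sym2.mem_and_mem_iff hxy).mp ⟨hx, hy⟩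
  exact ⟨hxy, hfe ▸ hf, hfe ▸ hcol⟩

lemma kempe_adj_elim {x y : V} (h : (kempeG B' c α β).Adj x y) :
    x ≠ y ∧ s(x, y) ∈ B' ∧ (c s(x, y) = α ∨ c s(x, y) = β) := h

lemma kempe_three (hc : properOn B' c) :
    ∀ x a b d : V, (kempeG B' c α β).Adj x a → (kempeG B' c α β).Adj x b →
      (kempeG B' c α β).Adj x d → a = b ∨ a = d ∨ b = d := by
  intro x a b d ha hb hd
  obtain ⟨hxa, hma, hca⟩ := ha
  obtain ⟨hxb, hmb, hcb⟩ := hb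
  obtain ⟨hxd, hmd, hcd⟩ := hd
  have key : ∀ {p q : V}, s(x,p) ∈ B' → s(x,q) ∈ B' → c s(x,p) = c s(x,q) → p = q := by
    intro p q hp hq hpq
    exact Sym2.congr_right.mp
      (hc x _ hp _ hq (Sym2.mem_mk_left x p) (Sym2.mem_mk_left x q) hpq)
  rcases hca with h1 | h1 <;> rcases hcb with h2 | h2 <;> rcases hcd with h3 | h3
  · exact Or.inl (key hma hmb (h1.trans h2.symm))
  · exact Or.inl (key hma hmb (h1.trans h2.symm))
  · exact Or.inr (Or.inl (key hma hmd (h1.trans h3.symm)))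
  · exact Or.inr (Or.inr (key hmb hmd (h2.trans h3.symm)))
  · exact Or.inr (Or.inr (key hmb hmd (h2.trans h3.symm)))
  · exact Or.inr (Or.inl (key hma hmd (h1.trans h3.symm)))
  · exact Or.inl (key hma hmb (h1.trans h2.symm))
  · exact Or.inl (key hma hmb (h1.trans h2.symm))

lemma kempe_one (hc : properOn B' c) {x : V}
    (hfree : freeAt B' c x α ∨ freeAt B' c x β) :
    ∀ a b, (kempeG B' c α β).Adj x a → (kempeG B' c α β).Adj x b → a = b := by
  intro a b ha hb
  obtain ⟨hxa, hma, hca⟩ := ha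
  obtain ⟨hxb, hmb, hcb⟩ := hb
  have key : c s(x,a) = c s(x,b) := by
    rcases hfree with hf | hf
    · have h1 : c s(x,a) ≠ α := hf _ hma (Sym2.mem_mk_left x a)
      have h2 : c s(x,b) ≠ α := hf _ hmb (Sym2.mem_mk_left x b)
      rcases hca with h | h
      · exact absurd h h1
      · rcases hcb with h' | h'
        · exact absurd h' h2
        · rw [h, h']
    · have h1 : c s(x,a) ≠ β := hf _ hma (Sym2.mem_mk_left x a)
      have h2 : c s(x,b) ≠ β := hf _ hmb (Sym2.mem_mk_left x b)
      rcases hca with h | h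
      · rcases hcb with h' | h'
        · rw [h, h']
        · exact absurd h' h2
      · exact absurd h h1
  exact Sym2.congr_right.mp
    (hc x _ hma _ hmb (Sym2.mem_mk_left x a) (Sym2.mem_mk_left x b) key)

open Classical in
noncomputable def swapc (B' : Finset (Sym2 V)) (c : Sym2 V → Fin k) (α β : Fin k) (z : V) :
    Sym2 V → Fin k := fun f =>
  if f ∈ B' ∧ (c f = α ∨ c f = β) ∧ ∃ x ∈ f, (kempeG B' c α β).Reachable z x
  then (if c f = α then β else α) else c f

variable {z : V}

lemma reach_of_mem_swapped {f : Sym2 V} {x : V} (hf : f ∈ B') (hcol : c f = α ∨ c f = β)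
    (hy : ∃ y ∈ f, (kempeG B' c α β).Reachable z y) (hx : x ∈ f) :
    (kempeG B' c α β).Reachable z x := by
  obtain ⟨y, hyf, hry⟩ := hy
  by_cases hxy : y = x
  · exact hxy ▸ hry
  · exact hry.trans (kempe_adj_of hxy hf hyf hx hcol).reachable

lemma swap_eq_of_unreach {x : V} (hx : ¬ (kempeG B' c α β).Reachable z x)
    {f : Sym2 V} (hf : f ∈ B') (hxf : x ∈ f) : swapc B' c α β z f = c f := by
  classical
  unfold swapc
  rw [if_neg]
  intro ⟨h1, h2, h3⟩
  exact hx (reach_of_mem_swapped h1 h2 h3 hxf)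

lemma swap_free_of_unreach {x : V} (hx : ¬ (kempeG B' c α β).Reachable z x) {γ : Fin k}
    (hfree : freeAt B' c x γ) : freeAt B' (swapc B' c α β z) x γ := by
  intro f hf hxf
  rw [swap_eq_of_unreach hx hf hxf]
  exact hfree f hf hxf

lemma swap_cases (f : Sym2 V) : swapc B' c α β z f = c f ∨
    (f ∈ B' ∧ (∃ x ∈ f, (kempeG B' c α β).Reachable z x) ∧
      ((c f = α ∧ swapc B' c α β z f = β) ∨ (c f = β ∧ c f ≠ α ∧ swapc B' c α β z f = α))) := by
  classical
  unfold swapc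
  split_ifs with h1 h2
  · exact Or.inr ⟨h1.1, h1.2.2, Or.inl ⟨h2, rfl⟩⟩
  · rcases h1.2.1 with h | h
    · exact absurd h h2
    · exact Or.inr ⟨h1.1, h1.2.2, Or.inr ⟨h, h2, rfl⟩⟩
  · exact Or.inl rfl

lemma swap_free_of_ne {x : V} {γ : Fin k} (hγα : γ ≠ α) (hγβ : γ ≠ β)
    (hfree : freeAt B' c x γ) : freeAt B' (swapc B' c α β z) x γ := by
  intro f hf hxf h
  rcases swap_cases (B' := B') (c := c) (α := α) (β := β) (z := z) f with hcase | ⟨_, _, hcase⟩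
  · rw [hcase] at h
    exact hfree f hf hxf h
  · rcases hcase with ⟨_, h2⟩ | ⟨_, _, h2⟩
    · exact hγβ (h.symm.trans h2)
    · exact hγα (h.symm.trans h2)

lemma swap_free_z (hαβ : α ≠ β) (hz : freeAt B' c z α) :
    freeAt B' (swapc B' c α β z) z β := by
  intro f hf hzf h
  rcases swap_cases (B' := B') (c := c) (α := α) (β := β) (z := z) f with hcase | ⟨_, _, hcase⟩
  · -- unswapped with c f = β : but then condition should have held
    have hcf : c f = β := hcase.symm.trans h
    have : swapc B' c α β z f = α := by
      classical
      unfold swapc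
      rw [if_pos ⟨hf, Or.inr hcf, z, hzf, SimpleGraph.Reachable.refl z⟩, if_neg]
      rw [hcf]; exact fun hh => hαβ hh.symm
    rw [h] at this
    exact hαβ this.symm
  · rcases hcase with ⟨h1, _⟩ | ⟨_, _, h2⟩
    · exact hz f hf hzf h1
    · exact hαβ ((h.symm.trans h2).symm)

lemma swap_proper (hαβ : α ≠ β) (hc : properOn B' c) :
    properOn B' (swapc B' c α β z) := by
  intro x f hf g hg hxf hxg hfg
  rcases swap_cases (B' := B') (c := c) (α := α) (β := β) (z := z) f with hcf | ⟨_, hrf, hcf⟩ <;>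
    rcases swap_cases (B' := B') (c := c) (α := α) (β := β) (z := z) g with hcg | ⟨_, hrg, hcg⟩
  · exact hc x f hf g hg hxf hxg (hcf ▸ hcg ▸ hfg)
  · -- g swapped, f not
    exfalso
    have hcolg : c g = α ∨ c g = β := by
      rcases hcg with ⟨h, _⟩ | ⟨h, _, _⟩
      · exact Or.inl h
      · exact Or.inr h
    have hreach : (kempeG B' c α β).Reachable z x := reach_of_mem_swapped hg hcolg hrg hxg
    -- then c f ∈ {α, β}? we know swapc f = c f and equals swapc g ∈ {α, β}
    have hcolf : c f = α ∨ c f = β := by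
      rcases hcg with ⟨_, h⟩ | ⟨_, _, h⟩
      · exact Or.inr (by rw [← hcf, hfg, h])
      · exact Or.inl (by rw [← hcf, hfg, h])
    -- so f should be swapped too
    have : swapc B' c α β z f ≠ c f := by
      classical
      unfold swapc
      rw [if_pos ⟨hf, hcolf, x, hxf, hreach⟩]
      rcases hcolf with h | h
      · rw [if_pos h, h]; exact fun hh => hαβ hh.symm
      · rw [if_neg (h ▸ fun hh => hαβ hh.symm), h]; exact hαβ
    exact this hcf
  · -- f swapped, g not : symmetric
    exfalso
    have hcolf : c f = α ∨ c f = β := by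
      rcases hcf with ⟨h, _⟩ | ⟨h, _, _⟩
      · exact Or.inl h
      · exact Or.inr h
    have hreach : (kempeG B' c α β).Reachable z x := reach_of_mem_swapped hf hcolf hrf hxf
    have hcolg : c g = α ∨ c g = β := by
      rcases hcf with ⟨_, h⟩ | ⟨_, _, h⟩
      · exact Or.inr (by rw [← hcg, ← hfg, h])
      · exact Or.inl (by rw [← hcg, ← hfg, h])
    have : swapc B' c α β z g ≠ c g := by
      classical
      unfold swapc
      rw [if_pos ⟨hg, hcolg, x, hxg, hreach⟩]
      rcases hcolg with h | h
      · rw [if_pos h, h]; exact fun hh => hαβ hh.symm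
      · rw [if_neg (h ▸ fun hh => hαβ hh.symm), h]; exact hαβ
    exact this hcg
  · -- both swapped
    have : c f = c g := by
      rcases hcf with ⟨h1, h2⟩ | ⟨h1, _, h2⟩ <;> rcases hcg with ⟨h3, h4⟩ | ⟨h3, _, h4⟩
      · rw [h1, h3]
      · exact absurd (by rw [← h2, hfg, h4] : β = α) (fun hh => hαβ hh.symm)
      · exact absurd (by rw [← h2, hfg, h4] : α = β) hαβ
      · rw [h1, h3]
    exact hc x f hf g hg hxf hxg this

end Kempe

section Fan
variable {V : Type*} [DecidableEq V] {k : ℕ}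

def IsFan (B : Finset (Sym2 V)) (u v₁ : V) (c : Sym2 V → Fin k) (vs : List V) : Prop :=
  vs.Nodup ∧ vs.getLast? = some v₁ ∧ (∀ w ∈ vs, s(u, w) ∈ B) ∧
  vs.Chain' (fun a b => s(u, a) ∈ B.erase s(u, v₁) ∧
    freeAt (B.erase s(u, v₁)) c b (c s(u, a)))

lemma fan_not_u {B : Finset (Sym2 V)} {u v₁ : V} {c : Sym2 V → Fin k} {vs : List V}
    (hnd : ∀ e ∈ B, ¬e.IsDiag) (hfan : IsFan B u v₁ c vs) {x} (hx : x ∈ vs) : x ≠ u := by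
  intro h
  exact hnd _ (hfan.2.2.1 x hx) (by rw [h]; exact Sym2.mk_isDiag_iff.mpr rfl)

lemma fan_length {B : Finset (Sym2 V)} {u v₁ : V} {c : Sym2 V → Fin k} {vs : List V}
    (hfan : IsFan B u v₁ c vs) : vs.length ≤ degF B u := by
  classical
  have hinj : Function.Injective (fun x : V => s(u, x)) := fun a b h => Sym2.congr_right.mp h
  have hnd : (vs.map (fun x : V => s(u, x))).Nodup := hfan.1.map hinj
  have hsub : (vs.map (fun x : V => s(u, x))).toFinset ⊆ B.filter (fun e => u ∈ e) := by
    intro e he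
    rw [List.mem_toFinset, List.mem_map] at he
    obtain ⟨x, hx, rfl⟩ := he
    exact Finset.mem_filter.mpr ⟨hfan.2.2.1 x hx, Sym2.mem_mk_left u x⟩
  calc vs.length = (vs.map (fun x : V => s(u, x))).toFinset.card := by
        rw [List.toFinset_card_of_nodup hnd, List.length_map]
    _ ≤ _ := Finset.card_le_card hsub

lemma fanshift {B : Finset (Sym2 V)} {u v₁ : V}
    (hnd : ∀ e ∈ B, ¬e.IsDiag) (he₁ : s(u, v₁) ∈ B) :
    ∀ (vs : List V) (c : Sym2 V → Fin k), properOn (B.erase s(u, v₁)) c →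
      IsFan B u v₁ c vs → ∀ (α : Fin k) (w : V) (rest : List V), vs = w :: rest →
      freeAt (B.erase s(u, v₁)) c w α → freeAt (B.erase s(u, v₁)) c u α →
      colorable k B := by
  intro vs
  induction vs with
  | nil => intro c _ _ α w rest h; exact absurd h (by simp)
  | cons w rest ih =>
    intro c hc hfan α wq restq heq hfw hfu
    obtain ⟨h1, h2⟩ := List.cons_eq_cons.mp heq
    subst h1; subst h2
    cases rest with
    | nil =>
      have hwv : w = v₁ := by
        have := hfan.2.1; simpa using this
      rw [hwv] at hfw
      refine ⟨Function.update c s(u, v₁) α, proper_update hc ?_⟩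
      intro x hx
      rcases Sym2.mem_iff.mp hx with rfl | rfl
      · exact hfu
      · exact hfw
    | cons t rest' =>
      have hnodup := hfan.1
      have hvlast : v₁ ∈ t :: rest' := by
        apply mem_of_getLast?'
        have := hfan.2.1
        rwa [List.getLast?_cons_cons] at this
      have hwne : w ≠ v₁ := by
        intro h
        exact (List.nodup_cons.mp hnodup).1 (h ▸ hvlast)
      have hwB' : s(u, w) ∈ B.erase s(u, v₁) :=
        Finset.mem_erase.mpr ⟨fun h => hwne (Sym2.congr_right.mp h),
          hfan.2.2.1 w (List.mem_cons_self)⟩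
      have hune : ∀ x ∈ w :: t :: rest', x ≠ u := fun x hx => fan_not_u hnd hfan hx
      set γ := c s(u, w) with hγ
      set c' := Function.update c s(u, w) α with hc'def
      have hagree : ∀ f : Sym2 V, f ≠ s(u, w) → c' f = c f := fun f hf =>
        Function.update_of_ne hf _ _
      have hc'p : properOn (B.erase s(u, v₁)) c' := by
        apply proper_update (hc.mono (Finset.erase_subset _ _))
        intro x hx
        rcases Sym2.mem_iff.mp hx with rfl | rfl
        · exact hfu.mono (Finset.erase_subset _ _)
        · exact hfw.mono (Finset.erase_subset _ _)
      have htrans : ∀ (x : V) (δ : Fin k), x ≠ u → x ≠ w →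
          freeAt (B.erase s(u, v₁)) c x δ → freeAt (B.erase s(u, v₁)) c' x δ := by
        intro x δ hxu hxw hfree f hf hxf
        by_cases hfe : f = s(u, w)
        · exfalso
          rcases Sym2.mem_iff.mp (hfe ▸ hxf) with h | h
          · exact hxu h
          · exact hxw h
        · rw [hagree f hfe]
          exact hfree f hf hxf
      have hfan' : IsFan B u v₁ c' (t :: rest') := by
        refine ⟨(List.nodup_cons.mp hnodup).2, ?_, ?_, ?_⟩
        · have := hfan.2.1; rwa [List.getLast?_cons_cons] at this
        · exact fun x hx => hfan.2.2.1 x (List.mem_cons_of_mem _ hx)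
        · have hch := hfan.2.2.2.tail
          apply chain'_suffix_imp hch
          intro a b r hs hR
          obtain ⟨haB, hab⟩ := hR
          have hain : a ∈ t :: rest' := hs.subset (List.mem_cons_self)
          have hbin : b ∈ t :: rest' :=
            hs.subset (List.mem_cons_of_mem _ (List.mem_cons_self))
          have haw : a ≠ w := fun h => (List.nodup_cons.mp hnodup).1 (h ▸ hain)
          have hbw : b ≠ w := fun h => (List.nodup_cons.mp hnodup).1 (h ▸ hbin)
          have hcol : c' s(u, a) = c s(u, a) :=
            hagree _ (fun h => haw (Sym2.congr_right.mp h))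
          rw [hcol]
          exact ⟨haB, htrans b _ (hune b (List.mem_cons_of_mem _ hbin)) hbw hab⟩
      have hpair := (List.isChain_cons_cons.mp hfan.2.2.2).1
      have htne : t ≠ w := by
        intro h
        exact (List.nodup_cons.mp hnodup).1 (h ▸ (List.mem_cons_self (a := t) (l := rest')))
      have hfγt : freeAt (B.erase s(u, v₁)) c' t γ :=
        htrans t γ (hune t (by simp)) htne hpair.2
      have hγα : γ ≠ α := hfu _ hwB' (Sym2.mem_mk_left u w)
      have hfγu : freeAt (B.erase s(u, v₁)) c' u γ := by
        intro f hf huf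
        by_cases hfe : f = s(u, w)
        · rw [hfe, hc'def, Function.update_self]
          exact fun h => hγα h.symm
        · rw [hagree f hfe]
          intro h
          exact hfe (hc u f hf _ hwB' huf (Sym2.mem_mk_left u w) (h.trans hγ))
      exact ih c' hc'p hfan' γ t rest' rfl hfγt hfγu

lemma ext_main (B : Finset (Sym2 V)) (hnd : ∀ e ∈ B, ¬e.IsDiag)
    (u v₁ : V) (he₁ : s(u, v₁) ∈ B) (hdegu : degF B u ≤ k)
    (c : Sym2 V → Fin k) (hc : properOn (B.erase s(u, v₁)) c)
    (hfree : ∀ x, s(u, x) ∈ B → ∃ γ, freeAt (B.erase s(u, v₁)) c x γ) :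
    colorable k B := by
  classical
  have humem : u ∈ s(u, v₁) := Sym2.mem_mk_left u v₁
  have hdegu' : degF (B.erase s(u, v₁)) u < k := by
    have h1 := degF_pos he₁ humem
    rw [degF_erase he₁ humem]
    omega
  obtain ⟨β, hβ⟩ := free_exists (c := c) hdegu'
  suffices H : ∀ n (vs : List V), IsFan B u v₁ c vs → degF B u + 1 ≤ n + vs.length →
      colorable k B by
    refine H (degF B u) [v₁] ⟨List.nodup_singleton _, rfl, ?_, List.isChain_singleton _⟩ (by simp)
    intro x hx
    rw [List.mem_singleton] at hx
    subst hx
    exact he₁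
  intro n
  induction n with
  | zero =>
    intro vs hfan hlen
    have hl := fan_length hfan
    exact absurd hlen (by omega)
  | succ n ih =>
    intro vs hfan hlen
    obtain ⟨w, rest, rfl⟩ : ∃ w rest, vs = w :: rest := by
      cases vs with
      | nil => obtain ⟨_, h, _⟩ := hfan; simp at h
      | cons a l => exact ⟨a, l, rfl⟩
    have hwmem : s(u, w) ∈ B := hfan.2.2.1 w (List.mem_cons_self)
    by_cases hαu' : ∃ α, freeAt (B.erase s(u, v₁)) c w α ∧ freeAt (B.erase s(u, v₁)) c u α
    · obtain ⟨α, hα, hαu⟩ := hαu'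
      exact fanshift hnd he₁ _ c hc hfan α w rest rfl hα hαu
    obtain ⟨α, hα⟩ := hfree w hwmem
    have hαu : ¬ freeAt (B.erase s(u, v₁)) c u α := fun h => hαu' ⟨α, hα, h⟩
    obtain ⟨f, hfB', hufm, hcf⟩ : ∃ f ∈ B.erase s(u, v₁), u ∈ f ∧ c f = α := by
      unfold freeAt at hαu
      push_neg at hαu
      obtain ⟨f, h1, h2, h3⟩ := hαu
      exact ⟨f, h1, h2, h3⟩
    obtain ⟨w', hw'u, hfrepr⟩ := exists_other (hnd f (Finset.mem_of_mem_erase hfB')) hufm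
    subst hfrepr
    have hw'w : w' ≠ w := by
      intro h
      exact hα _ hfB' (by rw [h]; exact Sym2.mem_mk_right u w) hcf
    by_cases hw'vs : w' ∈ w :: rest
    case neg =>
      refine ih (w' :: w :: rest) ⟨?_, ?_, ?_, ?_⟩ ?_
      · exact List.nodup_cons.mpr ⟨hw'vs, hfan.1⟩
      · rw [List.getLast?_cons_cons]; exact hfan.2.1
      · intro x hx
        rcases List.mem_cons.mp hx with rfl | hx
        · exact Finset.mem_of_mem_erase hfB'
        · exact hfan.2.2.1 x hx
      · unfold List.Chain'
        rw [List.isChain_cons_cons]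
        exact ⟨⟨hfB', by rw [hcf]; exact hα⟩, hfan.2.2.2⟩
      · simp only [List.length_cons] at hlen ⊢
        omega
    case pos =>
      have hαβ : α ≠ β := by
        intro h
        exact hαu (h ▸ hβ)
      have hw'v₁ : w' ≠ v₁ := by
        intro h
        exact (Finset.mem_erase.mp hfB').1 (by rw [h])
      obtain ⟨t, l₂, hsuf⟩ := exists_succ hw'vs hfan.2.1 hw'v₁
      have hchain := hfan.2.2.2
      have hsufchain := hchain.suffix hsuf
      have hpair := (List.isChain_cons_cons.mp hsufchain).1
      have hαt : freeAt (B.erase s(u, v₁)) c t α := by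
        have := hpair.2; rwa [hcf] at this
      have h2 := kempe_three (B' := B.erase s(u, v₁)) (α := α) (β := β) hc
      have hSu := kempe_one (B' := B.erase s(u, v₁)) (α := α) (β := β) hc (Or.inr hβ)
      have hSt := kempe_one (B' := B.erase s(u, v₁)) (α := α) (β := β) hc (Or.inl hαt)
      have hSw := kempe_one (B' := B.erase s(u, v₁)) (α := α) (β := β) hc (Or.inl hα)
      have htvs : t ∈ w :: rest :=
        hsuf.subset (List.mem_cons_of_mem _ (List.mem_cons_self))
      have hw'rest2 : (w' :: t :: l₂).Nodup := hfan.1.sublist hsuf.sublist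
      have hwt : w ≠ t := by
        rcases List.suffix_cons_iff.mp hsuf with he | hs
        · exact absurd (List.cons_eq_cons.mp he).1 hw'w
        · intro h
          exact (List.nodup_cons.mp hfan.1).1
            (h ▸ hs.subset (List.mem_cons_of_mem _ (List.mem_cons_self)))
      have hutn : u ≠ t := fun h => (fan_not_u hnd hfan htvs) h.symm
      have huwn : u ≠ w := fun h => (fan_not_u hnd hfan (List.mem_cons_self)) h.symm
      by_cases hReach : (kempeG (B.erase s(u, v₁)) c α β).Reachable t u
      · -- subcase B : swap at w
        have hwu : ¬ (kempeG (B.erase s(u, v₁)) c α β).Reachable w u := by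
          intro h
          exact lemP h2 hSu hSt hSw hutn huwn (fun hh => hwt hh.symm) hReach.symm h.symm
        have hwt' : ¬ (kempeG (B.erase s(u, v₁)) c α β).Reachable w t :=
          fun h => hwu (h.trans hReach)
        have hc'p : properOn (B.erase s(u, v₁)) (swapc (B.erase s(u, v₁)) c α β w) :=
          swap_proper hαβ hc
        have hfanc' : IsFan B u v₁ (swapc (B.erase s(u, v₁)) c α β w) (w :: rest) := by
          refine ⟨hfan.1, hfan.2.1, hfan.2.2.1, ?_⟩
          apply chain'_suffix_imp hchain
          intro a b r hsab hR
          obtain ⟨haB', hfb⟩ := hR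
          have hcua : swapc (B.erase s(u, v₁)) c α β w s(u, a) = c s(u, a) :=
            swap_eq_of_unreach hwu haB' (Sym2.mem_mk_left u a)
          refine ⟨haB', ?_⟩
          rw [hcua]
          rcases eq_or_ne (c s(u, a)) α with hα' | hα'
          · have haw' : a = w' := Sym2.congr_right.mp
              (hc u _ haB' _ hfB' (Sym2.mem_mk_left u a) (Sym2.mem_mk_left u w')
                (hα'.trans hcf.symm))
            subst haw'
            have hbt : b = t :=
              (List.cons_eq_cons.mp (suffix_head_unique hsab hsuf hfan.1)).1
            subst hbt
            rw [hα']
            exact swap_free_of_unreach hwt' hαt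
          · rcases eq_or_ne (c s(u, a)) β with hβ' | hβ'
            · exact absurd hβ' (hβ _ haB' (Sym2.mem_mk_left u a))
            · exact swap_free_of_ne hα' hβ' hfb
        have hβw : freeAt (B.erase s(u, v₁)) (swapc (B.erase s(u, v₁)) c α β w) w β :=
          swap_free_z hαβ hα
        have hβu : freeAt (B.erase s(u, v₁)) (swapc (B.erase s(u, v₁)) c α β w) u β :=
          swap_free_of_unreach hwu hβ
        exact fanshift hnd he₁ _ _ hc'p hfanc' β w rest rfl hβw hβu
      · -- subcase A : swap at t
        have hc'p : properOn (B.erase s(u, v₁)) (swapc (B.erase s(u, v₁)) c α β t) :=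
          swap_proper hαβ hc
        have hsuf₂ : (t :: l₂) <:+ (w :: rest) := (List.suffix_cons w' _).trans hsuf
        have hw'notin : w' ∉ t :: l₂ := (List.nodup_cons.mp hw'rest2).1
        have hfan₂ : IsFan B u v₁ (swapc (B.erase s(u, v₁)) c α β t) (t :: l₂) := by
          refine ⟨hfan.1.sublist hsuf₂.sublist,
            (getLast?_suffix hsuf₂ (by simp)).trans hfan.2.1, ?_, ?_⟩
          · exact fun x hx => hfan.2.2.1 x (hsuf₂.subset hx)
          · apply chain'_suffix_imp (hchain.suffix hsuf₂)
            intro a b r hsab hR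
            obtain ⟨haB', hfb⟩ := hR
            have hain : a ∈ t :: l₂ := hsab.subset (List.mem_cons_self)
            have hcua : swapc (B.erase s(u, v₁)) c α β t s(u, a) = c s(u, a) :=
              swap_eq_of_unreach hReach haB' (Sym2.mem_mk_left u a)
            refine ⟨haB', ?_⟩
            rw [hcua]
            rcases eq_or_ne (c s(u, a)) α with hα' | hα'
            · exfalso
              have haw' : a = w' := Sym2.congr_right.mp
                (hc u _ haB' _ hfB' (Sym2.mem_mk_left u a) (Sym2.mem_mk_left u w')
                  (hα'.trans hcf.symm))
              exact hw'notin (haw' ▸ hain)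
            · rcases eq_or_ne (c s(u, a)) β with hβ' | hβ'
              · exact absurd hβ' (hβ _ haB' (Sym2.mem_mk_left u a))
              · exact swap_free_of_ne hα' hβ' hfb
        have hβt : freeAt (B.erase s(u, v₁)) (swapc (B.erase s(u, v₁)) c α β t) t β :=
          swap_free_z hαβ hαt
        have hβu : freeAt (B.erase s(u, v₁)) (swapc (B.erase s(u, v₁)) c α β t) u β :=
          swap_free_of_unreach hReach hβ
        exact fanshift hnd he₁ _ _ hc'p hfan₂ β t l₂ rfl hβt hβu

end Fan

section Main
variable {V : Type*} [DecidableEq V]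

theorem colorable_main (k : ℕ) (hk : 0 < k) (A : Finset (Sym2 V)) (hnd : ∀ e ∈ A, ¬e.IsDiag)
    (hdeg : ∀ x, degF A x ≤ k) (hlow : ∀ e ∈ A, ∃ x ∈ e, degF A x < k) :
    colorable k A := by
  classical
  by_contra hA
  set T := A.powerset.filter (fun B => ¬ colorable k B) with hT
  have hTne : T.Nonempty := ⟨A, by simp [hT, hA]⟩
  obtain ⟨B, hBT, hBmin⟩ := T.exists_min_image Finset.card hTne
  have hBA : B ⊆ A := Finset.mem_powerset.mp (Finset.mem_filter.mp hBT).1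
  have hBnc : ¬ colorable k B := by
    have := (Finset.mem_filter.mp hBT).2
    simpa using this
  have hcrit : ∀ B' ⊂ B, colorable k B' := by
    intro B' hB'
    by_contra h
    have hmem : B' ∈ T := Finset.mem_filter.mpr
      ⟨Finset.mem_powerset.mpr (hB'.subset.trans hBA), by simpa using h⟩
    have h1 := hBmin B' hmem
    have h2 := Finset.card_lt_card hB'
    omega
  have hndB : ∀ e ∈ B, ¬e.IsDiag := fun e he => hnd e (hBA he)
  have hdegB : ∀ x, degF B x ≤ k := fun x => le_trans (degF_mono hBA x) (hdeg x)
  have hVAL : ∀ u v₁ : V, s(u, v₁) ∈ B → ∃ w, w ≠ v₁ ∧ s(u, w) ∈ B ∧ degF B w = k := by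
    intro u v₁ he₁
    by_contra hcon
    push_neg at hcon
    obtain ⟨c, hc⟩ := hcrit (B.erase s(u, v₁)) (Finset.erase_ssubset he₁)
    apply hBnc
    apply ext_main B hndB u v₁ he₁ (hdegB u) c hc
    intro x hx
    apply free_exists
    by_cases hxv : x = v₁
    · subst hxv
      rw [degF_erase he₁ (Sym2.mem_mk_right u x)]
      have h1 := degF_pos he₁ (Sym2.mem_mk_right u x)
      have h2 := hdegB x
      omega
    · have h1 : degF B x ≠ k := hcon x hxv hx
      have h2 := hdegB x
      have h3 := degF_mono (Finset.erase_subset s(u, v₁) B) x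
      omega
  have hBne : B.Nonempty := by
    rcases Finset.eq_empty_or_nonempty B with rfl | h
    · exact absurd ⟨fun _ => ⟨0, hk⟩, fun x f hf => absurd hf (by simp)⟩ hBnc
    · exact h
  obtain ⟨e, heB⟩ := hBne
  obtain ⟨a, b, rfl⟩ := sym2_repr e
  obtain ⟨w, _, hw, hdw⟩ := hVAL a b heB
  obtain ⟨x, hxa, hx, hdx⟩ := hVAL w a (by rwa [Sym2.eq_swap] at hw)
  obtain ⟨y, hy, hylt⟩ := hlow s(w, x) (hBA hx)
  have hyB := degF_mono hBA y
  rcases Sym2.mem_iff.mp hy with rfl | rfl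
  · omega
  · omega

end Main

theorem stmt_10 {V : Type*} [Fintype V] [DecidableEq V] (G : SimpleGraph V)
    (k : ℕ) (hk : 2 ≤ k) (ℓ : V → ℕ) (hℓ : ∀ v, ℓ v < k)
    (F : Finset (Sym2 V))
    (hF : ↑F ⊆ G.edgeSet ∧ ∀ v : V, ℓ v ≤ degF F v ∧ degF F v ≤ k)
    (hmin : ∀ F' ⊂ F, ¬ (↑F' ⊆ G.edgeSet ∧ ∀ v : V, ℓ v ≤ degF F' v ∧ degF F' v ≤ k)) :
    ∃ M : Fin k → Finset (Sym2 V),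
      (∀ i, IsMatching G (M i)) ∧
      (∀ i j, i ≠ j → Disjoint (M i) (M j)) ∧
      Finset.univ.sup M = F ∧
      ∀ v : V, ℓ v ≤ (Finset.univ.filter fun i => Covers (M i) v).card := by
  classical
  obtain ⟨hFsub, hFdeg⟩ := hF
  have hnd : ∀ e ∈ F, ¬e.IsDiag := fun e he =>
    G.not_isDiag_of_mem_edgeSet (hFsub (Finset.mem_coe.mpr he))
  have hlow : ∀ e ∈ F, ∃ x ∈ e, degF F x < k := by
    intro e he
    have hss := hmin (F.erase e) (Finset.erase_ssubset he)
    have hsub : ↑(F.erase e) ⊆ G.edgeSet := fun f hf =>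
      hFsub (Finset.mem_coe.mpr (Finset.mem_of_mem_erase (Finset.mem_coe.mp hf)))
    have h2 : ¬ ∀ v : V, ℓ v ≤ degF (F.erase e) v ∧ degF (F.erase e) v ≤ k :=
      fun h => hss ⟨hsub, h⟩
    obtain ⟨v, hv⟩ := not_forall.mp h2
    have huk : degF (F.erase e) v ≤ k :=
      le_trans (degF_mono (Finset.erase_subset _ _) v) (hFdeg v).2
    have hlv : ¬ ℓ v ≤ degF (F.erase e) v := fun h => hv ⟨h, huk⟩
    by_cases hve : v ∈ e
    · refine ⟨v, hve, ?_⟩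
      have h3 := degF_erase he hve
      have h4 := (hFdeg v).1
      have h5 := hℓ v
      omega
    · rw [degF_erase_not_mem hve] at hlv
      exact absurd (hFdeg v).1 hlv
  obtain ⟨c, hc⟩ := colorable_main k (by omega) F hnd (fun x => (hFdeg x).2) hlow
  refine ⟨fun i => F.filter (fun e => c e = i), ?_, ?_, ?_, ?_⟩
  · intro i
    constructor
    · intro e he
      rw [Finset.mem_coe, Finset.mem_filter] at he
      exact hFsub (Finset.mem_coe.mpr he.1)
    · intro e he f hf hef v hv
      obtain ⟨hve, hvf⟩ := hv
      rw [Finset.mem_coe, Finset.mem_filter] at he hf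
      exact hef (hc v e he.1 f hf.1 hve hvf (he.2.trans hf.2.symm))
  · intro i j hij
    rw [Finset.disjoint_left]
    intro e he hej
    rw [Finset.mem_filter] at he hej
    exact hij (he.2.symm.trans hej.2)
  · apply le_antisymm
    · exact Finset.sup_le (fun i _ => Finset.le_iff_subset.mpr (Finset.filter_subset _ _))
    · refine Finset.le_iff_subset.mpr (fun e he => ?_)
      exact Finset.mem_sup.mpr ⟨c e, Finset.mem_univ _, Finset.mem_filter.mpr ⟨he, rfl⟩⟩
  · intro v
    have h1 : ℓ v ≤ (F.filter (fun e => v ∈ e)).card := (hFdeg v).1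
    refine le_trans h1 (Finset.card_le_card_of_injOn c ?_ ?_)
    · intro e he
      rw [Finset.mem_coe, Finset.mem_filter] at he
      exact Finset.mem_filter.mpr
        ⟨Finset.mem_univ _, ⟨e, Finset.mem_filter.mpr ⟨he.1, rfl⟩, he.2⟩⟩
    · intro e he f hf hef
      rw [Finset.mem_coe, Finset.mem_filter] at he hf
      exact hc v e he.1 f hf.1 he.2 hf.2 hef
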